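/- Let ℓ ≥ 1 and define the ℓ×ℓ matrix X by X_{i,j} = 2cos(2π(2i−1)(2j−1)/(8ℓ)) for 1 ≤ i,j ≤ ℓ. Then X² = 2ℓ·I, the identity matrix scaled by 2ℓ. -/

import Mathlib

open Real Finset Matrix

lemma key_sum (ℓ : ℕ) (y : ℂ) (hy : y ≠ 0) (h4 : y ^ (4 * ℓ) = 1) (h2 : y ^ 2 ≠ 1) :
    ∑ j ∈ Finset.range ℓ, ((y ^ (2 * j + 1)) + (y⁻¹) ^ (2 * j + 1)) = 0 := by
  have hA : (y ^ 2) ^ ℓ * (y ^ 2) ^ ℓ = 1 := by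
    rw [← pow_add, ← pow_mul]
    calc y ^ (2 * (ℓ + ℓ)) = y ^ (4 * ℓ) := by ring_nf
    _ = 1 := h4
  have hB : ((y⁻¹) ^ 2) ^ ℓ = (y ^ 2) ^ ℓ := by
    rw [inv_pow, inv_pow]
    exact inv_eq_of_mul_eq_one_right hA
  have hz2 : (y⁻¹) ^ 2 ≠ 1 := by
    intro h
    apply h2
    rw [inv_pow] at h
    rw [← inv_inv (y ^ 2), h, inv_one]
  have s1 : ∑ j ∈ Finset.range ℓ, y ^ (2 * j + 1) = y * ∑ j ∈ Finset.range ℓ, (y ^ 2) ^ j := by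
    rw [Finset.mul_sum]
    exact Finset.sum_congr rfl fun j _ => by ring
  have s2 : ∑ j ∈ Finset.range ℓ, (y⁻¹) ^ (2 * j + 1)
      = y⁻¹ * ∑ j ∈ Finset.range ℓ, ((y⁻¹) ^ 2) ^ j := by
    rw [Finset.mul_sum]
    exact Finset.sum_congr rfl fun j _ => by ring
  rw [Finset.sum_add_distrib, s1, s2, geom_sum_eq h2, geom_sum_eq hz2, hB]
  have d1 : y ^ 2 - 1 ≠ 0 := sub_ne_zero.mpr h2
  have d2 : (y⁻¹) ^ 2 - 1 ≠ 0 := sub_ne_zero.mpr hz2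
  have d3 : y - y ^ 3 ≠ 0 := by
    intro h
    apply d1
    have : y * (1 - y ^ 2) = 0 := by linear_combination h
    rcases mul_eq_zero.mp this with h' | h'
    · exact absurd h' hy
    · linear_combination -h'
  field_simp
  ring

theorem stmt_6 (ℓ : ℕ) (hℓ : 1 ≤ ℓ)
    (X : Matrix (Fin ℓ) (Fin ℓ) ℝ)
    (hX : ∀ i j, X i j = 2 * Real.cos (2 * π * (2 * i.val + 1) * (2 * j.val + 1) / (8 * ℓ))) :
    X * X = (2 * ℓ : ℝ) • (1 : Matrix (Fin ℓ) (Fin ℓ) ℝ) := by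
  have hlC : (ℓ : ℂ) ≠ 0 := Nat.cast_ne_zero.mpr (by omega)
  set x : ℂ := Complex.exp (π * Complex.I / (4 * ℓ)) with hxdef
  have hx0 : x ≠ 0 := Complex.exp_ne_zero _
  have hxm : ∀ m : ℤ, x ^ m = Complex.exp (m * (π * Complex.I / (4 * ℓ))) := by
    intro m
    rw [Complex.exp_int_mul]
  have hpi : (π : ℂ) ≠ 0 := by simpa using Real.pi_ne_zero
  have hx1 : ∀ m : ℤ, x ^ m = 1 → (8 * (ℓ : ℤ)) ∣ m := by
    intro m hm
    rw [hxm, Complex.exp_eq_one_iff] at hm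
    obtain ⟨n, hn⟩ := hm
    have h8 : (m : ℂ) = 8 * ℓ * n := by
      field_simp at hn
      have h2 : (m : ℂ) * (↑π * Complex.I) = 8 * ↑ℓ * ↑n * (↑π * Complex.I) := by
        linear_combination (↑π * Complex.I) * hn
      exact mul_right_cancel₀ (mul_ne_zero hpi Complex.I_ne_zero) h2
    have : m = 8 * (ℓ : ℤ) * n := by exact_mod_cast h8
    exact ⟨n, this⟩
  have hx8 : x ^ ((8 : ℤ) * ℓ) = 1 := by
    rw [hxm, Complex.exp_eq_one_iff]
    refine ⟨1, ?_⟩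
    push_cast
    rw [mul_div_assoc', div_eq_iff (mul_ne_zero (by norm_num) hlC : (4 : ℂ) * ℓ ≠ 0)]
    ring
  have hxne : ∀ m : ℤ, m ≠ 0 → m.natAbs < 8 * ℓ → x ^ m ≠ 1 := by
    intro m hm hb h1
    obtain ⟨n, hn⟩ := hx1 m h1
    have hd : (8 * ℓ : ℕ) ∣ m.natAbs := by
      have h := Int.natAbs_dvd_natAbs.mpr (⟨n, hn⟩ : (8 * (ℓ : ℤ)) ∣ m)
      have e : (8 * (ℓ : ℤ)).natAbs = 8 * ℓ := by
        rw [Int.natAbs_mul, Int.natAbs_natCast]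
        rfl
      rwa [e] at h
    have : m.natAbs ≠ 0 := Int.natAbs_ne_zero.mpr hm
    have := Nat.le_of_dvd (Nat.pos_of_ne_zero this) hd
    omega
  have Tz : ∀ c : ℤ, c ≠ 0 → c.natAbs < 2 * ℓ →
      ∑ j ∈ Finset.range ℓ, ((x ^ (2 * c)) ^ (2 * j + 1) + ((x ^ (2 * c))⁻¹) ^ (2 * j + 1)) = 0 := by
    intro c hc hcb
    refine key_sum ℓ _ (zpow_ne_zero _ hx0) ?_ ?_
    · have h : ((x ^ (2 * c)) ^ (4 * ℓ) : ℂ) = x ^ ((8 : ℤ) * ℓ * c) := by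
        rw [← zpow_natCast (x ^ (2 * c)) (4 * ℓ), ← _root_.zpow_mul]
        congr 1
        push_cast
        ring
      rw [h, _root_.zpow_mul, hx8, _root_.one_zpow]
    · have h : ((x ^ (2 * c)) ^ 2 : ℂ) = x ^ (4 * c) := by
        rw [← zpow_natCast (x ^ (2 * c)) 2, ← _root_.zpow_mul]
        congr 1
        push_cast
        ring
      rw [h]
      apply hxne
      · exact mul_ne_zero (by norm_num) hc
      · rw [Int.natAbs_mul]
        norm_num
        omega
  have hXC : ∀ i j : Fin ℓ, ((X i j : ℝ) : ℂ)
      = x ^ (((2 * i.val + 1) * (2 * j.val + 1) : ℤ)) + x ^ (-((2 * i.val + 1) * (2 * j.val + 1) : ℤ)) := by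
    intro i j
    rw [hX i j]
    push_cast
    rw [Complex.two_cos, hxm, hxm]
    congr 1
    · congr 1
      push_cast
      field_simp
      ring
    · congr 1
      push_cast
      field_simp
      ring
  have expand : ∀ p q : ℤ, (x ^ p + x ^ (-p)) * (x ^ q + x ^ (-q))
      = x ^ (p + q) + x ^ (-(p + q)) + (x ^ (p - q) + x ^ (-(p - q))) := by
    intro p q
    have hp : x ^ p ≠ 0 := zpow_ne_zero p hx0
    have hq : x ^ q ≠ 0 := zpow_ne_zero q hx0
    simp only [_root_.zpow_neg, zpow_add₀ hx0, zpow_sub₀ hx0]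
    field_simp
    ring
  have conv1 : ∀ (c : ℤ) (j : ℕ), x ^ (2 * c * (2 * (j : ℤ) + 1)) = (x ^ (2 * c)) ^ (2 * j + 1) := by
    intro c j
    rw [_root_.zpow_mul, ← zpow_natCast (x ^ (2 * c)) (2 * j + 1)]
    congr 1
  have conv2 : ∀ (c : ℤ) (j : ℕ), x ^ (-(2 * c * (2 * (j : ℤ) + 1))) = ((x ^ (2 * c))⁻¹) ^ (2 * j + 1) := by
    intro c j
    rw [_root_.zpow_neg, conv1, inv_pow]
  ext i k
  rw [Matrix.mul_apply, Matrix.smul_apply, Matrix.one_apply, smul_eq_mul]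
  set c1 : ℤ := (i : ℕ) + (k : ℕ) + 1 with hc1
  set c2 : ℤ := (i : ℕ) - (k : ℕ) with hc2
  have hprod : ∀ j : Fin ℓ, ((X i j : ℝ) : ℂ) * ((X j k : ℝ) : ℂ)
      = ((x ^ (2 * c1)) ^ (2 * (j : ℕ) + 1) + ((x ^ (2 * c1))⁻¹) ^ (2 * (j : ℕ) + 1))
        + ((x ^ (2 * c2)) ^ (2 * (j : ℕ) + 1) + ((x ^ (2 * c2))⁻¹) ^ (2 * (j : ℕ) + 1)) := by
    intro j
    rw [hXC i j, hXC j k, expand]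
    rw [show ((2 * i.val + 1) * (2 * j.val + 1) : ℤ) + ((2 * j.val + 1) * (2 * k.val + 1) : ℤ)
          = 2 * c1 * (2 * (j : ℕ) + 1) from by rw [hc1]; push_cast; ring,
        show ((2 * i.val + 1) * (2 * j.val + 1) : ℤ) - ((2 * j.val + 1) * (2 * k.val + 1) : ℤ)
          = 2 * c2 * (2 * (j : ℕ) + 1) from by rw [hc2]; push_cast; ring,
        conv1, conv2, conv1, conv2]
  have hsum : ∑ j : Fin ℓ, (((X i j : ℝ) : ℂ) * ((X j k : ℝ) : ℂ))
      = (∑ j ∈ Finset.range ℓ, ((x ^ (2 * c1)) ^ (2 * j + 1) + ((x ^ (2 * c1))⁻¹) ^ (2 * j + 1)))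
      + (∑ j ∈ Finset.range ℓ, ((x ^ (2 * c2)) ^ (2 * j + 1) + ((x ^ (2 * c2))⁻¹) ^ (2 * j + 1))) := by
    rw [Finset.sum_congr rfl fun j _ => hprod j, Finset.sum_add_distrib,
      ← Fin.sum_univ_eq_sum_range
        (fun j => (x ^ (2 * c1)) ^ (2 * j + 1) + ((x ^ (2 * c1))⁻¹) ^ (2 * j + 1)) ℓ,
      ← Fin.sum_univ_eq_sum_range
        (fun j => (x ^ (2 * c2)) ^ (2 * j + 1) + ((x ^ (2 * c2))⁻¹) ^ (2 * j + 1)) ℓ]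
  have hT1 : ∑ j ∈ Finset.range ℓ, ((x ^ (2 * c1)) ^ (2 * j + 1) + ((x ^ (2 * c1))⁻¹) ^ (2 * j + 1)) = 0 := by
    apply Tz
    · rw [hc1]; omega
    · rw [hc1]
      have := i.isLt
      have := k.isLt
      omega
  rcases eq_or_ne i k with rfl | hik
  · rw [if_pos rfl, mul_one]
    have hc20 : c2 = 0 := by rw [hc2]; ring
    have hT2 : ∑ j ∈ Finset.range ℓ, ((x ^ (2 * c2)) ^ (2 * j + 1) + ((x ^ (2 * c2))⁻¹) ^ (2 * j + 1))
        = 2 * ℓ := by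
      rw [hc20]
      norm_num
      push_cast
      ring
    have main : ((∑ j : Fin ℓ, X i j * X j i : ℝ) : ℂ) = ((2 * ℓ : ℝ) : ℂ) := by
      push_cast
      rw [hsum, hT1, hT2]
      push_cast
      ring
    exact_mod_cast main
  · rw [if_neg hik, mul_zero]
    have hT2 : ∑ j ∈ Finset.range ℓ, ((x ^ (2 * c2)) ^ (2 * j + 1) + ((x ^ (2 * c2))⁻¹) ^ (2 * j + 1)) = 0 := by
      apply Tz
      · rw [hc2]
        have : i.val ≠ k.val := fun h => hik (Fin.ext h)
        omega
      · rw [hc2]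
        have := i.isLt
        have := k.isLt
        omega
    have main : ((∑ j : Fin ℓ, X i j * X j k : ℝ) : ℂ) = ((0 : ℝ) : ℂ) := by
      push_cast
      rw [hsum, hT1, hT2]
      ring
    exact_mod_cast main
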